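/- arXiv:2404.08400 — 2 statements merged into one kernel-verified Lean document; each statement's English description precedes it below -/
import Mathlib

section
/- Let T be a tree of order m with diameter d ≥ 2, let ε = ε(T), and let K_n be the complete graph on n ≥ 2 vertices. If rn(T □ K_n) = (mn − 1)(d + ε) − 2nL(T), then there exists an ordering w_0, w_1, ..., w_{mn−1} of V(T □ K_n), with w_t = (u_{i_t}, v_{j_t}), such that: (a) L(u_{i_0}) = L(u_{i_{mn−1}}) = 0; (b) v_{j_t} and v_{j_{t+1}} are distinct for all 0 ≤ t ≤ mn−2; (c) for all 0 ≤ a < b ≤ mn−1, d(u_{i_a}, u_{i_b}) ≥ Σ_{t=a}^{b−1} [L(u_{i_t}) + L(u_{i_{t+1}}) − (d + ε)] + (d + 1). -/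
open SimpleGraph Finset

namespace RadioPaper

/-- A radio labelling of `G`: `|f u - f v| ≥ diam G + 1 - d(u,v)` for all distinct `u v`. -/
def IsRadioLabelling {α : Type*} [Fintype α] (G : SimpleGraph α) (f : α → ℕ) : Prop :=
  ∀ u v : α, u ≠ v → G.diam + 1 ≤ Nat.dist (f u) (f v) + G.dist u v

/-- The span of a labelling: the maximum difference between two labels. -/
noncomputable def spanOf {α : Type*} [Fintype α] (f : α → ℕ) : ℕ :=
  Finset.univ.sup fun p : α × α => Nat.dist (f p.1) (f p.2)

/-- The radio number of `G`: the minimum span of a radio labelling of `G`. -/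
noncomputable def radioNumber {α : Type*} [Fintype α] (G : SimpleGraph α) : ℕ :=
  sInf { k | ∃ f : α → ℕ, IsRadioLabelling G f ∧ spanOf f = k }

variable {V : Type*} [Fintype V]

/-- The weight of `G` from `v`. -/
noncomputable def weight (G : SimpleGraph V) (v : V) : ℕ := ∑ u, G.dist u v

/-- The set of weight centers: vertices minimizing the weight. -/
def weightCenters (G : SimpleGraph V) : Set V := {v | ∀ u, weight G v ≤ weight G u}

/-- The level of a vertex: its distance to the nearest weight center. -/
noncomputable def level (G : SimpleGraph V) (u : V) : ℕ :=
  sInf ((fun x => G.dist u x) '' weightCenters G)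

/-- The total level of `G`. -/
noncomputable def totalLevel (G : SimpleGraph V) : ℕ := ∑ u, level G u

/-- `ε(G) = 1` if `G` has a unique weight center, `0` otherwise. -/
noncomputable def epsilon (G : SimpleGraph V) : ℕ :=
  if (weightCenters G).ncard = 1 then 1 else 0

/-- `x` lies on a shortest (= unique, in a tree) path from `a` to `b`. -/
def onPath (G : SimpleGraph V) (a x b : V) : Prop :=
  G.dist a x + G.dist x b = G.dist a b

/-- `x` is a common ancestor of `u` and `v` (tree rooted at its weight centers). -/
def IsCommonAncestor (G : SimpleGraph V) (x u v : V) : Prop :=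
  (∃ w ∈ weightCenters G, onPath G w x u) ∧ ∃ w ∈ weightCenters G, onPath G w x v

/-- `φ(u,v)`: the maximum level of a common ancestor of `u` and `v`. -/
noncomputable def phi (G : SimpleGraph V) (u v : V) : ℕ :=
  sSup (level G '' {x | IsCommonAncestor G x u v})

open scoped Classical in
/-- `δ(u,v) = 1` iff `G` has two weight centers and the `(u,v)`-path contains both. -/
noncomputable def delta (G : SimpleGraph V) (u v : V) : ℕ :=
  if (weightCenters G).ncard = 2 ∧ ∀ x ∈ weightCenters G, onPath G u x v then 1 else 0

/-- `u` and `v` are in different branches: their path contains exactly one weight center. -/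
def InDifferentBranches (G : SimpleGraph V) (u v : V) : Prop :=
  {x ∈ weightCenters G | onPath G u x v}.ncard = 1

/-- `u` and `v` are in opposite branches: the tree has two weight centers and the
`(u,v)`-path contains both. -/
def InOppositeBranches (G : SimpleGraph V) (u v : V) : Prop :=
  (weightCenters G).ncard = 2 ∧ ∀ x ∈ weightCenters G, onPath G u x v

/-- `u` and `v` are in the same branch: their path contains no weight center. -/
def InSameBranch (G : SimpleGraph V) (u v : V) : Prop :=
  ∀ x ∈ weightCenters G, ¬ onPath G u x v

/-! ### Auxiliary lemmas -/

section TreeLemmas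
variable {W : Type*} {G : SimpleGraph W}

lemma dist_add_dist_le_length {u v x : W} (p : G.Walk u v) (hx : x ∈ p.support) :
    G.dist u x + G.dist x v ≤ p.length := by
  classical
  have h := p.take_spec hx
  calc G.dist u x + G.dist x v
      ≤ (p.takeUntil x hx).length + (p.dropUntil x hx).length :=
        add_le_add (SimpleGraph.dist_le _) (SimpleGraph.dist_le _)
    _ = p.length := by rw [← SimpleGraph.Walk.length_append, h]

lemma concat_isPath {u a b : W} {p : G.Walk u a} (hp : p.IsPath)
    (hab : G.Adj a b) (hb : b ∉ p.support) : (p.concat hab).IsPath := by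
  rw [Walk.isPath_def, Walk.support_concat]
  rw [Walk.isPath_def] at hp
  simp [List.nodup_append, hp, hb]
  exact fun x hx h => hb (h ▸ hx)

/-- In a tree, distances from `u` to adjacent vertices differ by exactly one. -/
lemma adj_dist_cases (hT : G.IsTree) {a b : W} (hab : G.Adj a b) (u : W) :
    G.dist u b = G.dist u a + 1 ∨ G.dist u a = G.dist u b + 1 := by
  have key : ∀ {x y : W}, G.Adj x y → G.dist u x ≤ G.dist u y → G.dist u y = G.dist u x + 1 := by
    intro x y hxy hle
    have h1 : G.dist u y ≤ G.dist u x + 1 := by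
      have := hT.isConnected.dist_triangle (u := u) (v := x) (w := y)
      have hxy1 : G.dist x y = 1 := by rw [SimpleGraph.dist_eq_one_iff_adj]; exact hxy
      omega
    have hne : G.dist u y ≠ G.dist u x := by
      intro heq
      obtain ⟨p, hp, hplen⟩ := hT.isConnected.exists_path_of_dist u x
      have hy : y ∉ p.support := by
        intro hy
        have h2 := dist_add_dist_le_length p hy
        have h3 : G.dist y x = 1 := by rw [SimpleGraph.dist_eq_one_iff_adj]; exact hxy.symm
        omega
      obtain ⟨r, hr, hrlen⟩ := hT.isConnected.exists_path_of_dist u y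
      have hq := concat_isPath hp hxy hy
      have heqw := (hT.existsUnique_path u y).unique hq hr
      have hlen : (p.concat hxy).length = r.length := by rw [heqw]
      rw [Walk.length_concat] at hlen
      omega
    omega
  rcases le_total (G.dist u a) (G.dist u b) with h | h
  · exact Or.inl (key hab h)
  · exact Or.inr (key hab.symm h)

/-- Propagation along a path in a tree: if the distance from `u` increases from `a` to `x`,
it keeps increasing from `x` to `b`. -/
lemma dist_chain (hT : G.IsTree) {a x b u : W} (hax : G.Adj a x) (hxb : G.Adj x b)
    (hab : a ≠ b) (h : G.dist u a < G.dist u x) : G.dist u x < G.dist u b := by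
  have hux : G.dist u x = G.dist u a + 1 := by
    rcases adj_dist_cases hT hax u with h' | h' <;> omega
  by_contra hcon
  push_neg at hcon
  have hub : G.dist u x = G.dist u b + 1 := by
    rcases adj_dist_cases hT hxb u with h' | h' <;> omega
  obtain ⟨p, hp, hplen⟩ := hT.isConnected.exists_path_of_dist u a
  obtain ⟨q, hq, hqlen⟩ := hT.isConnected.exists_path_of_dist u b
  have hxp : x ∉ p.support := by
    intro hx
    have h2 := dist_add_dist_le_length p hx
    have h3 : G.dist x a = 1 := by rw [SimpleGraph.dist_eq_one_iff_adj]; exact hax.symm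
    omega
  have hxq : x ∉ q.support := by
    intro hx
    have h2 := dist_add_dist_le_length q hx
    have h3 : G.dist x b = 1 := by rw [SimpleGraph.dist_eq_one_iff_adj]; exact hxb
    omega
  have h1 := concat_isPath hp hax hxp
  have h2 := concat_isPath hq hxb.symm hxq
  have heqw := (hT.existsUnique_path u x).unique h1 h2
  obtain ⟨hv, -⟩ := Walk.concat_inj heqw
  exact hab hv

lemma dist_getVert_le (hc : G.Connected) {u v : W} (p : G.Walk u v) (i : ℕ) :
    G.dist u (p.getVert i) ≤ i := by
  induction p generalizing i with
  | nil => simp [Walk.getVert, SimpleGraph.dist_self]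
  | @cons a x v h q ih =>
    cases i with
    | zero => simp
    | succ i =>
      rw [Walk.getVert_cons_succ]
      have h1 : G.dist a x ≤ 1 := by
        have := SimpleGraph.dist_le h.toWalk
        simpa using this
      have h2 := ih i
      have h3 := hc.dist_triangle (u := a) (v := x) (w := q.getVert i)
      omega

lemma geodesic_getVert (hc : G.Connected) {u v : W} {p : G.Walk u v}
    (hlen : p.length = G.dist u v) {i : ℕ} (hi : i ≤ p.length) :
    G.dist u (p.getVert i) = i ∧ G.dist (p.getVert i) v = p.length - i := by
  have h1 : G.dist u (p.getVert i) ≤ i := dist_getVert_le hc p i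
  have h2 : G.dist (p.getVert i) v ≤ p.length - i := by
    have h := dist_getVert_le hc p.reverse (p.length - i)
    rw [Walk.getVert_reverse] at h
    have heq : p.length - (p.length - i) = i := by omega
    rw [heq] at h
    rwa [SimpleGraph.dist_comm] at h
  have h3 := hc.dist_triangle (u := u) (v := p.getVert i) (w := v)
  omega

end TreeLemmas

/-- Any two weight centers of a tree are at distance at most 1. -/
lemma centers_dist_le_one {T : SimpleGraph V} (hT : T.IsTree) {c c' : V}
    (hc : c ∈ weightCenters T) (hc' : c' ∈ weightCenters T) : T.dist c c' ≤ 1 := by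
  classical
  by_contra hgt
  push_neg at hgt
  obtain ⟨p, hp, hplen⟩ := hT.isConnected.exists_path_of_dist c c'
  set d := T.dist c c' with hd
  have hpl : p.length = d := hplen
  set q : ℕ → V := fun i => p.getVert i with hq
  have hAdj : ∀ i, i < d → T.Adj (q i) (q (i + 1)) := fun i hi =>
    p.adj_getVert_succ (by omega)
  have hqdist : ∀ i, i ≤ d → T.dist c (q i) = i := fun i hi =>
    (geodesic_getVert hT.isConnected hplen (by omega)).1
  set A : ℕ → Finset V := fun i =>
    univ.filter (fun u => T.dist u (q i) < T.dist u (q (i + 1))) with hA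
  have hW : ∀ i, i < d → (weight T (q (i + 1)) : ℤ) - weight T (q i)
      = 2 * (A i).card - Fintype.card V := by
    intro i hi
    have key : ∀ u : V, ((T.dist u (q (i + 1)) : ℤ) - T.dist u (q i))
        = if T.dist u (q i) < T.dist u (q (i + 1)) then 1 else -1 := by
      intro u
      rcases adj_dist_cases hT (hAdj i hi) u with h | h
      · rw [if_pos (by omega), h]; push_cast; ring
      · rw [if_neg (by omega), h]; push_cast; ring
    have hsum : (weight T (q (i + 1)) : ℤ) - weight T (q i)
        = ∑ u : V, ((T.dist u (q (i + 1)) : ℤ) - T.dist u (q i)) := by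
      rw [Finset.sum_sub_distrib]
      simp [weight]
    rw [hsum, Finset.sum_congr rfl fun u _ => key u, Finset.sum_ite, Finset.sum_const,
      Finset.sum_const]
    have hcards := Finset.card_filter_add_card_filter_not
      (s := (univ : Finset V)) (p := fun u => T.dist u (q i) < T.dist u (q (i + 1)))
    simp only [card_univ] at hcards
    have : (A i).card = (univ.filter fun u => T.dist u (q i) < T.dist u (q (i + 1))).card := rfl
    rw [this]
    simp only [nsmul_eq_mul, mul_one, mul_neg_one]
    push_cast
    omega
  have hc₁ : ∀ u, weight T c ≤ weight T u := hc
  have hc₂ : ∀ u, weight T c' ≤ weight T u := hc'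
  have hq0 : q 0 = c := p.getVert_zero
  have hqd : q d = c' := by rw [show q d = p.getVert p.length by rw [hpl]]; exact p.getVert_length
  have hssub : ∀ i, i + 1 < d → A i ⊂ A (i + 1) := by
    intro i hi
    constructor
    · intro u hu
      simp only [hA, mem_filter, mem_univ, true_and] at hu ⊢
      have hne2 : q i ≠ q (i + 2) := by
        intro heq
        have h1 := hqdist i (by omega)
        have h2 := hqdist (i + 2) (by omega)
        rw [heq] at h1; omega
      exact dist_chain hT (hAdj i (by omega)) (hAdj (i + 1) (by omega)) hne2 hu
    · intro hsub
      have hmem : q (i + 1) ∈ A (i + 1) := by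
        simp only [hA, mem_filter, mem_univ, true_and]
        have hne : q (i + 1) ≠ q (i + 2) := by
          intro heq
          have h1 := hqdist (i + 1) (by omega)
          have h2 := hqdist (i + 2) (by omega)
          rw [heq] at h1; omega
        have hpos := hT.isConnected.pos_dist_of_ne hne
        simpa [SimpleGraph.dist_self] using hpos
      have hbad := hsub hmem
      simp only [hA, mem_filter, mem_univ, true_and, SimpleGraph.dist_self] at hbad
      omega
  have hcardmono : ∀ i, i < d → (A 0).card + i ≤ (A i).card := by
    intro i
    induction i with
    | zero => intro _; simp
    | succ i ih =>
      intro hi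
      have h1 := ih (by omega)
      have h2 := Finset.card_lt_card (hssub i (by omega))
      omega
  have hA0 : Fintype.card V ≤ 2 * (A 0).card := by
    have h0 := hc₁ (q 1)
    have h1 := hW 0 (by omega)
    rw [show (0 : ℕ) + 1 = 1 from rfl, hq0] at h1
    omega
  have htel : (weight T (q d) : ℤ) - weight T (q 0)
      = ∑ i ∈ range d, ((weight T (q (i + 1)) : ℤ) - weight T (q i)) :=
    (Finset.sum_range_sub (fun i => (weight T (q i) : ℤ)) d).symm
  have hterm : ∀ i ∈ range d, (2 * i : ℤ) ≤ (weight T (q (i + 1)) : ℤ) - weight T (q i) := by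
    intro i hi
    rw [Finset.mem_range] at hi
    rw [hW i hi]
    have h1 := hcardmono i hi
    omega
  have hsum2 : (2 : ℤ) ≤ ∑ i ∈ range d, (2 * i : ℤ) := by
    have h1 : ((1 : ℕ) : ℤ) * 2 ≤ ∑ i ∈ range d, (2 * i : ℤ) := by
      have := Finset.single_le_sum (f := fun i : ℕ => (2 * i : ℤ))
        (fun i _ => by positivity) (Finset.mem_range.mpr (show 1 < d by omega))
      simpa [mul_comm] using this
    simpa using h1
  have hsum3 := Finset.sum_le_sum hterm
  rw [← htel, hq0, hqd] at hsum3
  have hfin := hc₂ c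
  omega

lemma weightCenters_nonempty (T : SimpleGraph V) [Nonempty V] :
    (weightCenters T).Nonempty := by
  obtain ⟨c, -, hc⟩ := Finset.exists_min_image univ (weight T)
    ⟨Classical.arbitrary V, mem_univ _⟩
  exact ⟨c, fun u => hc u (mem_univ u)⟩

lemma exists_level (T : SimpleGraph V) [Nonempty V] (u : V) :
    ∃ c ∈ weightCenters T, level T u = T.dist u c := by
  have hne : ((fun x => T.dist u x) '' weightCenters T).Nonempty :=
    (weightCenters_nonempty T).image _
  obtain ⟨c, hc, hdist⟩ := Nat.sInf_mem hne
  exact ⟨c, hc, hdist.symm⟩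

lemma level_le {T : SimpleGraph V} {c : V} (hc : c ∈ weightCenters T) (u : V) :
    level T u ≤ T.dist u c :=
  Nat.sInf_le ⟨c, hc, rfl⟩

/-- The fundamental level inequality: `d(u,v) ≤ L(u) + L(v) + 1 - ε`. -/
lemma dist_le_level_add {T : SimpleGraph V} (hT : T.IsTree) [Nonempty V] (u v : V) :
    (T.dist u v : ℤ) ≤ level T u + level T v + 1 - epsilon T := by
  classical
  by_cases h1 : (weightCenters T).ncard = 1
  · obtain ⟨c, hc⟩ := Set.ncard_eq_one.mp h1
    have hu : level T u = T.dist u c := by rw [level, hc]; simp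
    have hv : level T v = T.dist v c := by rw [level, hc]; simp
    have heps : epsilon T = 1 := by rw [epsilon, if_pos h1]
    have t1 := hT.isConnected.dist_triangle (u := u) (v := c) (w := v)
    have t2 : T.dist c v = T.dist v c := SimpleGraph.dist_comm
    rw [heps, hu, hv]
    push_cast
    omega
  · have heps : epsilon T = 0 := by rw [epsilon, if_neg h1]
    obtain ⟨cu, hcu, hu⟩ := exists_level T u
    obtain ⟨cv, hcv, hv⟩ := exists_level T v
    have h2 : T.dist cu cv ≤ 1 := centers_dist_le_one hT hcu hcv
    have t1 := hT.isConnected.dist_triangle (u := u) (v := cu) (w := v)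
    have t2 := hT.isConnected.dist_triangle (u := cu) (v := cv) (w := v)
    have t3 : T.dist cv v = T.dist v cv := SimpleGraph.dist_comm
    rw [heps, hu, hv]
    push_cast
    omega

section BoxProd
variable {α : Type*} {β : Type*} {G : SimpleGraph α} {H : SimpleGraph β}

lemma boxProd_walk_length_ge (hG : G.Connected) (hH : H.Connected) :
    ∀ (x y : α × β) (w : (G □ H).Walk x y), G.dist x.1 y.1 + H.dist x.2 y.2 ≤ w.length := by
  intro x y w
  induction w with
  | nil => simp [SimpleGraph.dist_self]
  | @cons s t y h p ih =>
    rw [Walk.length_cons]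
    rcases SimpleGraph.boxProd_adj.mp h with ⟨ha, hb⟩ | ⟨ha, hb⟩
    · have h1 : G.dist s.1 t.1 ≤ 1 := by simpa using SimpleGraph.dist_le ha.toWalk
      have h2 := hG.dist_triangle (u := s.1) (v := t.1) (w := y.1)
      rw [hb]
      omega
    · have h1 : H.dist s.2 t.2 ≤ 1 := by simpa using SimpleGraph.dist_le ha.toWalk
      have h2 := hH.dist_triangle (u := s.2) (v := t.2) (w := y.2)
      rw [hb]
      omega

/-- Distance formula in a box product. -/
lemma boxProd_dist (hG : G.Connected) (hH : H.Connected) (x y : α × β) :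
    (G □ H).dist x y = G.dist x.1 y.1 + H.dist x.2 y.2 := by
  obtain ⟨a, b⟩ := x
  obtain ⟨c, d⟩ := y
  refine le_antisymm ?_ ?_
  · obtain ⟨p, hp⟩ := hG.exists_walk_length_eq_dist a c
    obtain ⟨q, hq⟩ := hH.exists_walk_length_eq_dist b d
    have := SimpleGraph.dist_le ((p.boxProdLeft (H := H) b).append (q.boxProdRight G c))
    have e1 : (p.boxProdLeft (H := H) b).length = p.length := Walk.length_map _ _
    have e2 : (q.boxProdRight G c).length = q.length := Walk.length_map _ _
    rwa [Walk.length_append, e1, e2, hp, hq] at this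
  · obtain ⟨w, hw⟩ := (hG.boxProd hH).exists_walk_length_eq_dist (a, b) (c, d)
    have := boxProd_walk_length_ge hG hH (a, b) (c, d) w
    rw [hw] at this
    exact this

end BoxProd

lemma ediam_ne_top_of_connected {α : Type*} [Fintype α] [Nonempty α] {G : SimpleGraph α}
    (hG : G.Connected) : G.ediam ≠ ⊤ := by
  obtain ⟨u, v, h⟩ := G.exists_edist_eq_ediam_of_finite
  rw [← h]
  exact SimpleGraph.edist_ne_top_iff_reachable.mpr (hG u v)

lemma dist_top_le_one {n : ℕ} (a b : Fin n) : (⊤ : SimpleGraph (Fin n)).dist a b ≤ 1 := by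
  rcases eq_or_ne a b with rfl | h
  · simp [SimpleGraph.dist_self]
  · rw [SimpleGraph.dist_top_of_ne h]

/-- Diameter of `T □ K_n`. -/
lemma boxProd_top_diam [Nonempty V] {T : SimpleGraph V} (hT : T.Connected)
    {n : ℕ} (hn : 2 ≤ n) : (T □ (⊤ : SimpleGraph (Fin n))).diam = T.diam + 1 := by
  have hnn : Nonempty (Fin n) := ⟨⟨0, by omega⟩⟩
  have hKconn : (⊤ : SimpleGraph (Fin n)).Connected := connected_top
  have hPconn := hT.boxProd hKconn
  have hPed := ediam_ne_top_of_connected hPconn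
  have hTed := ediam_ne_top_of_connected hT
  refine le_antisymm ?_ ?_
  · obtain ⟨x, y, hxy⟩ := (T □ (⊤ : SimpleGraph (Fin n))).exists_dist_eq_diam
    rw [← hxy, boxProd_dist hT hKconn]
    have h1 := SimpleGraph.dist_le_diam hTed (u := x.1) (v := y.1)
    have h2 := dist_top_le_one x.2 y.2
    omega
  · obtain ⟨u, v, huv⟩ := T.exists_dist_eq_diam
    have hne : (⟨0, by omega⟩ : Fin n) ≠ ⟨1, by omega⟩ := by
      intro h; simpa using congrArg Fin.val h
    have := SimpleGraph.dist_le_diam hPed (u := (u, ⟨0, by omega⟩)) (v := (v, ⟨1, by omega⟩))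
    rw [boxProd_dist hT hKconn, SimpleGraph.dist_top_of_ne hne, huv] at this
    exact this

lemma mult_dist_ge {p q M : ℕ} (h : p ≠ q) : M ≤ Nat.dist (p * M) (q * M) := by
  rcases Nat.lt_or_ge p q with hlt | hge
  · have h2 : p * M + M ≤ q * M := by
      have := Nat.mul_le_mul_right M (show p + 1 ≤ q by omega)
      simpa [add_mul, one_mul] using this
    have := Nat.dist_eq_sub_of_le (show p * M ≤ q * M by omega)
    omega
  · have hlt : q < p := by omega
    have h2 : q * M + M ≤ p * M := by
      have := Nat.mul_le_mul_right M (show q + 1 ≤ p by omega)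
      simpa [add_mul, one_mul] using this
    have := Nat.dist_eq_sub_of_le (show q * M ≤ p * M by omega)
    rw [Nat.dist_comm]
    omega

/-- necessity part of Theorem 3.2: if `rn(T □ K_n) = (mn−1)(d+ε) − 2nL(T)`
then there is an ordering `w_0, …, w_{mn−1}` of `V(T □ K_n)` satisfying (a)–(c). -/
theorem exists_ordering_of_radioNumber_eq {V : Type*} [Fintype V]
    (T : SimpleGraph V) (hT : T.IsTree) (m n : ℕ)
    (hm : Fintype.card V = m) (hd : 2 ≤ T.diam) (hn : 2 ≤ n)
    (hrn : (radioNumber (T □ (⊤ : SimpleGraph (Fin n))) : ℤ) =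
      ((m * n : ℤ) - 1) * (T.diam + epsilon T) - 2 * n * totalLevel T) :
    ∃ w : ℕ → V × Fin n, Set.BijOn w (Set.Iio (m * n)) Set.univ ∧
      -- (a)
      level T (w 0).1 = 0 ∧ level T (w (m * n - 1)).1 = 0 ∧
      -- (b)
      (∀ t, t + 1 < m * n → (w t).2 ≠ (w (t + 1)).2) ∧
      -- (c)
      (∀ a b, a < b → b < m * n →
        (∑ t ∈ Finset.Ico a b,
            ((level T (w t).1 : ℤ) + level T (w (t + 1)).1 - (T.diam + epsilon T)))
          + (T.diam + 1) ≤ (T.dist (w a).1 (w b).1 : ℤ)) := by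
  classical
  have hVnt : Nontrivial V := nontrivial_of_diam_ne_zero (G := T) (by omega)
  have hVne : Nonempty V := inferInstance
  have hnn : Nonempty (Fin n) := ⟨⟨0, by omega⟩⟩
  set G := T □ (⊤ : SimpleGraph (Fin n)) with hGdef
  have hKconn : (⊤ : SimpleGraph (Fin n)).Connected := connected_top
  have hGconn : G.Connected := hT.isConnected.boxProd hKconn
  have hGed : G.ediam ≠ ⊤ := ediam_ne_top_of_connected hGconn
  have hGdiam : G.diam = T.diam + 1 := boxProd_top_diam hT.isConnected hn
  have hGdist : ∀ x y : V × Fin n, G.dist x y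
      = T.dist x.1 y.1 + (⊤ : SimpleGraph (Fin n)).dist x.2 y.2 :=
    boxProd_dist hT.isConnected hKconn
  set N := m * n with hNdef
  have hm2 : 2 ≤ m := hm ▸ Fintype.one_lt_card
  have hN4 : 4 ≤ N := le_trans (by norm_num) (Nat.mul_le_mul hm2 hn)
  have hcard : Fintype.card (V × Fin n) = N := by
    rw [Fintype.card_prod, Fintype.card_fin, hm]
  -- an optimal radio labelling
  have hSne : { k | ∃ f : V × Fin n → ℕ, IsRadioLabelling G f ∧ spanOf f = k }.Nonempty := by
    let e := Fintype.equivFin (V × Fin n)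
    refine ⟨spanOf (fun x => (e x : ℕ) * (G.diam + 1)),
      fun x => (e x : ℕ) * (G.diam + 1), ?_, rfl⟩
    intro u v huv
    have hne : (e u : ℕ) ≠ (e v : ℕ) := by
      intro h
      exact huv (e.injective (Fin.ext h))
    have := mult_dist_ge (M := G.diam + 1) hne
    change G.diam + 1 ≤ Nat.dist ((e u : ℕ) * (G.diam + 1)) ((e v : ℕ) * (G.diam + 1))
      + G.dist u v
    omega
  obtain ⟨f, hf, hfspan⟩ := Nat.sInf_mem hSne
  have hinj : Function.Injective f := by
    intro u v huv
    by_contra hne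
    have h1 := hf u v hne
    have h2 := SimpleGraph.dist_le_diam hGed (u := u) (v := v)
    have h3 : Nat.dist (f u) (f v) = 0 := by simp [huv, Nat.dist_self]
    omega
  -- sort the vertices by label
  letI : LinearOrder (V × Fin n) := LinearOrder.lift' f hinj
  let σ : Fin N ≃o (V × Fin n) := monoEquivOfFin _ hcard
  have hσmono : ∀ k l : Fin N, k < l → f (σ k) < f (σ l) := by
    intro k l hkl
    exact σ.strictMono hkl
  have hN1 : 1 ≤ N := by omega
  set w : ℕ → V × Fin n := fun t => σ ⟨min t (N - 1), by omega⟩ with hwdef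
  have hw : ∀ t (ht : t < N), w t = σ ⟨t, ht⟩ := by
    intro t ht
    simp only [hwdef]
    congr 1
    exact Fin.ext (by simp; omega)
  have hwmono : ∀ s t, s < t → t < N → f (w s) < f (w t) := by
    intro s t hst ht
    rw [hw s (by omega), hw t ht]
    exact hσmono _ _ (by simp [Fin.mk_lt_mk]; omega)
  have hwne : ∀ s t, s < t → t < N → w s ≠ w t := by
    intro s t hst ht heq
    have := hwmono s t hst ht
    rw [heq] at this
    omega
  -- the objects of interest
  set F : ℕ → ℤ := fun t => (f (w t) : ℤ) with hFdef
  set LL : ℕ → ℤ := fun t => (level T (w t).1 : ℤ) with hLLdef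
  have hLLnn : ∀ t, 0 ≤ LL t := fun t => Int.natCast_nonneg _
  -- radio condition, integer form
  have hrad : ∀ s t, s < t → t < N →
      (T.diam : ℤ) + 2 ≤ (F t - F s)
        + T.dist (w s).1 (w t).1 + (⊤ : SimpleGraph (Fin n)).dist (w s).2 (w t).2 := by
    intro s t hst ht
    have h1 := hf (w s) (w t) (hwne s t hst ht)
    rw [hGdiam, hGdist] at h1
    have h2 : f (w s) ≤ f (w t) := le_of_lt (hwmono s t hst ht)
    rw [Nat.dist_eq_sub_of_le h2] at h1
    have h3 := hwmono s t hst ht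
    simp only [hFdef]
    push_cast
    omega
  -- per-step lower bound
  have hstep : ∀ t, t + 1 < N →
      (T.diam : ℤ) + epsilon T - LL t - LL (t + 1) ≤ F (t + 1) - F t := by
    intro t ht
    have h1 := hrad t (t + 1) (by omega) ht
    have h2 := dist_le_level_add hT (w t).1 (w (t + 1)).1
    have h3 := dist_top_le_one (w t).2 (w (t + 1)).2
    simp only [hLLdef]
    push_cast at h2 h3 ⊢
    omega
  -- span equals F (N-1) - F 0
  have hF0le : ∀ x : V × Fin n, f (w 0) ≤ f x ∧ f x ≤ f (w (N - 1)) := by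
    intro x
    have hrange : ∃ k, k < N ∧ x = w k := by
      refine ⟨(σ.symm x : ℕ), (σ.symm x).2, ?_⟩
      rw [hw _ (σ.symm x).2]
      simp
    obtain ⟨k, hk, rfl⟩ := hrange
    constructor
    · rcases Nat.eq_zero_or_pos k with rfl | hpos
      · exact le_refl _
      · exact le_of_lt (hwmono 0 k hpos hk)
    · rcases eq_or_ne k (N - 1) with rfl | hne
      · exact le_refl _
      · exact le_of_lt (hwmono k (N - 1) (by omega) (by omega))
  have hspan : spanOf f = f (w (N - 1)) - f (w 0) := by
    apply le_antisymm
    · apply Finset.sup_le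
      intro p _
      obtain ⟨h1, h2⟩ := hF0le p.1
      obtain ⟨h3, h4⟩ := hF0le p.2
      rcases Nat.le_total (f p.1) (f p.2) with h | h
      · rw [Nat.dist_eq_sub_of_le h]; omega
      · rw [Nat.dist_comm, Nat.dist_eq_sub_of_le h]; omega
    · have hmem := Finset.le_sup (f := fun p : (V × Fin n) × (V × Fin n) =>
        Nat.dist (f p.1) (f p.2)) (mem_univ (w (N - 1), w 0))
      have h1 : f (w 0) ≤ f (w (N - 1)) := (hF0le (w 0)).2
      calc f (w (N - 1)) - f (w 0) = Nat.dist (f (w (N - 1))) (f (w 0)) := by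
            rw [Nat.dist_comm, Nat.dist_eq_sub_of_le h1]
        _ ≤ _ := hmem
  have hrn' : radioNumber G = spanOf f := hfspan.symm
  have hrnF : (radioNumber G : ℤ) = F (N - 1) - F 0 := by
    rw [hrn', hspan]
    have h1 : f (w 0) ≤ f (w (N - 1)) := (hF0le (w 0)).2
    simp only [hFdef]
    omega
  -- total level sum
  have hLsum : ∑ t ∈ range N, LL t = (n : ℤ) * totalLevel T := by
    have hbij : ∑ t ∈ range N, LL t = ∑ x : V × Fin n, (level T x.1 : ℤ) := by
      have e1 : ∑ k : Fin N, (level T (σ k).1 : ℤ) = ∑ t ∈ range N, LL t := by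
        rw [← Fin.sum_univ_eq_sum_range (fun t => LL t) N]
        apply Finset.sum_congr rfl
        intro k _
        simp only [hLLdef]
        rw [hw k k.2]
      have e2 : ∑ k : Fin N, (level T (σ k).1 : ℤ)
          = ∑ x : V × Fin n, (level T x.1 : ℤ) :=
        Equiv.sum_comp σ.toEquiv (fun x => (level T x.1 : ℤ))
      rw [← e1, e2]
    rw [hbij, Fintype.sum_prod_type]
    simp only [Finset.sum_const, card_univ, Fintype.card_fin, nsmul_eq_mul]
    rw [totalLevel]
    push_cast
    rw [Finset.mul_sum]
  -- the two sums
  set B : ℕ → ℤ := fun t => (T.diam : ℤ) + epsilon T - LL t - LL (t + 1) with hBdef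
  have htel : ∑ t ∈ range (N - 1), (F (t + 1) - F t) = F (N - 1) - F 0 :=
    Finset.sum_range_sub F (N - 1)
  have hBsum : ∑ t ∈ range (N - 1), B t
      = ((N : ℤ) - 1) * ((T.diam : ℤ) + epsilon T)
        - 2 * ((n : ℤ) * totalLevel T) + LL 0 + LL (N - 1) := by
    have h1 : ∑ t ∈ range N, LL t = (∑ t ∈ range (N - 1), LL t) + LL (N - 1) := by
      conv_lhs => rw [show N = (N - 1) + 1 by omega]
      exact Finset.sum_range_succ LL (N - 1)
    have h2 : ∑ t ∈ range N, LL t = (∑ t ∈ range (N - 1), LL (t + 1)) + LL 0 := by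
      conv_lhs => rw [show N = (N - 1) + 1 by omega]
      exact Finset.sum_range_succ' LL (N - 1)
    simp only [hBdef]
    rw [Finset.sum_sub_distrib, Finset.sum_sub_distrib, Finset.sum_const, Finset.card_range,
      nsmul_eq_mul]
    have hNc : ((N - 1 : ℕ) : ℤ) = (N : ℤ) - 1 := by omega
    rw [hNc]
    linarith [h1, h2, hLsum]
  have hrnval : (radioNumber G : ℤ)
      = ((N : ℤ) - 1) * ((T.diam : ℤ) + epsilon T) - 2 * ((n : ℤ) * totalLevel T) := by
    rw [hrn]
    have : ((m : ℤ) * n) = (N : ℤ) := by rw [hNdef]; push_cast; ring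
    rw [← this]
    push_cast
    ring
  have hstep' : ∀ t ∈ range (N - 1), B t ≤ F (t + 1) - F t := fun t ht =>
    hstep t (by rw [Finset.mem_range] at ht; omega)
  have hsumle := Finset.sum_le_sum hstep'
  rw [htel, hBsum, ← hrnF, hrnval] at hsumle
  have hL0 : LL 0 = 0 ∧ LL (N - 1) = 0 := by
    have := hLLnn 0
    have := hLLnn (N - 1)
    constructor <;> omega
  -- per-step equality
  have hsumeq : ∑ t ∈ range (N - 1), (F (t + 1) - F t) = ∑ t ∈ range (N - 1), B t := by
    rw [htel, hBsum, ← hrnF, hrnval, hL0.1, hL0.2]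
    ring
  have heq : ∀ t ∈ range (N - 1), F (t + 1) - F t = B t := by
    intro t ht
    by_contra hne
    have hlt : B t < F (t + 1) - F t := lt_of_le_of_ne (hstep' t ht) (fun h => hne h.symm)
    have h2 : ∑ s ∈ range (N - 1), B s < ∑ s ∈ range (N - 1), (F (s + 1) - F s) :=
      Finset.sum_lt_sum hstep' ⟨t, ht, hlt⟩
    omega
  -- now deliver the goods
  refine ⟨w, ?_, ?_, ?_, ?_, ?_⟩
  · -- BijOn
    refine ⟨fun x _ => Set.mem_univ _, ?_, ?_⟩
    · intro s hs t ht heq'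
      simp only [Set.mem_Iio] at hs ht
      by_contra hne
      rcases Nat.lt_or_ge s t with h | h
      · exact hwne s t h ht heq'
      · exact hwne t s (by omega) hs heq'.symm
    · intro x _
      refine ⟨(σ.symm x : ℕ), Set.mem_Iio.mpr (σ.symm x).2, ?_⟩
      rw [hw _ (σ.symm x).2]
      simp
  · -- level at 0
    have := hL0.1
    simp only [hLLdef] at this
    exact_mod_cast this
  · -- level at N-1
    have := hL0.2
    simp only [hLLdef] at this
    exact_mod_cast this
  · -- (b)
    intro t ht h2
    have heqt := heq t (Finset.mem_range.mpr (by omega))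
    have h1 := hrad t (t + 1) (by omega) (by omega)
    have hK : (⊤ : SimpleGraph (Fin n)).dist (w t).2 (w (t + 1)).2 = 0 := by
      rw [h2]; exact SimpleGraph.dist_self
    rw [hK] at h1
    have h3 := dist_le_level_add hT (w t).1 (w (t + 1)).1
    simp only [hBdef, hLLdef] at heqt
    push_cast at h1 h3 heqt
    omega
  · -- (c)
    intro a b hab hbN
    have h1 := hrad a b hab hbN
    have h2 := dist_top_le_one (w a).2 (w b).2
    have hFab : F b - F a = ∑ t ∈ Finset.Ico a b, B t := by
      have h3 : ∑ t ∈ Finset.Ico a b, (F (t + 1) - F t)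
          = ∑ t ∈ range b, (F (t + 1) - F t) - ∑ t ∈ range a, (F (t + 1) - F t) :=
        Finset.sum_Ico_eq_sub _ (le_of_lt hab)
      rw [Finset.sum_range_sub F, Finset.sum_range_sub F] at h3
      have h4 : F b - F a = ∑ t ∈ Finset.Ico a b, (F (t + 1) - F t) := by rw [h3]; ring
      rw [h4]
      apply Finset.sum_congr rfl
      intro t ht
      rw [Finset.mem_Ico] at ht
      exact heq t (Finset.mem_range.mpr (by omega))
    have hgoal : ∑ t ∈ Finset.Ico a b,
        ((level T (w t).1 : ℤ) + level T (w (t + 1)).1 - ((T.diam : ℤ) + epsilon T))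
        = - ∑ t ∈ Finset.Ico a b, B t := by
      rw [← Finset.sum_neg_distrib]
      apply Finset.sum_congr rfl
      intro t _
      simp only [hBdef, hLLdef]
      ring
    rw [hgoal, ← hFab]
    push_cast at h1 ⊢
    omega

end RadioPaper
end

section
/- Let T be a tree of order m with diameter d ≥ 2 and |W(T)| = 2, let K_n be the complete graph on n ≥ 2 vertices, and let f be a radio labelling of T □ K_n inducing the ordering w_0, w_1, ..., w_{mn−1} of V(T □ K_n) with 0 = f(w_0) < f(w_1) < ... < f(w_{mn−1}) and w_t = (u_{i_t}, v_{j_t}). Then Σ_{t=0}^{mn−2} d(w_t, w_{t+1}) ≤ 2nL(T) + 2(mn − 1). -/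
open SimpleGraph Finset

namespace RadioPaper

variable {V : Type*} [Fintype V]

variable {T : SimpleGraph V}

lemma isPath_concat {u v x : V} {p : T.Walk u v} (hp : p.IsPath) (h : T.Adj v x)
    (hx : x ∉ p.support) : (p.concat h).IsPath := by
  rw [SimpleGraph.Walk.isPath_def, SimpleGraph.Walk.support_concat,
    List.nodup_append]
  refine ⟨hp.support_nodup, List.nodup_singleton _, ?_⟩
  intro a ha b hb hab
  rw [List.mem_singleton] at hb
  subst hb; subst hab; exact hx ha

lemma path_eq (hT : T.IsTree) {u v : V} {p q : T.Walk u v} (hp : p.IsPath) (hq : q.IsPath) :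
    p = q :=
  ((hT.existsUnique_path u v).unique hp hq)

lemma dist_add_dist_of_mem (hc : T.Connected) {u v c : V} (p : T.Walk u v)
    (hp : p.length = T.dist u v) (h : c ∈ p.support) :
    T.dist u c + T.dist c v = T.dist u v := by
  classical
  have h1 : T.dist u c ≤ (p.takeUntil c h).length := SimpleGraph.dist_le _
  have h2 : T.dist c v ≤ (p.dropUntil c h).length := SimpleGraph.dist_le _
  have h3 := congrArg SimpleGraph.Walk.length (p.take_spec h)
  rw [SimpleGraph.Walk.length_append] at h3
  have h4 : T.dist u v ≤ T.dist u c + T.dist c v := hc.dist_triangle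
  omega

lemma adj_dist_ne (hT : T.IsTree) {a x : V} (hax : T.Adj a x) (v : V) :
    T.dist v a ≠ T.dist v x := by
  intro hk
  obtain ⟨p, hp, hl⟩ := hT.isConnected.exists_path_of_dist v a
  by_cases hx : x ∈ p.support
  · have h1 := dist_add_dist_of_mem hT.isConnected p hl hx
    have h2 : T.dist x a = 1 := by
      rw [SimpleGraph.dist_comm]; exact SimpleGraph.dist_eq_one_iff_adj.mpr hax
    omega
  · have hq : (p.concat hax).IsPath := isPath_concat hp hax hx
    obtain ⟨q, hqp, hql⟩ := hT.isConnected.exists_path_of_dist v x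
    have he := path_eq hT hq hqp
    have hlen := congrArg SimpleGraph.Walk.length he
    rw [SimpleGraph.Walk.length_concat] at hlen
    omega

lemma adj_dist_cases_s19 (hT : T.IsTree) {a x : V} (hax : T.Adj a x) (v : V) :
    T.dist v x = T.dist v a + 1 ∨ T.dist v a = T.dist v x + 1 := by
  have h1 : T.dist a x = 1 := SimpleGraph.dist_eq_one_iff_adj.mpr hax
  have h2 : T.dist x a = 1 := by rwa [SimpleGraph.dist_comm] at h1
  have t1 : T.dist v x ≤ T.dist v a + T.dist a x := hT.isConnected.dist_triangle
  have t2 : T.dist v a ≤ T.dist v x + T.dist x a := hT.isConnected.dist_triangle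
  have hne := adj_dist_ne hT hax v
  omega

lemma cross (hT : T.IsTree) {a x p q : V} (hax : T.Adj a x) (hpq : T.Adj p q)
    (hp : T.dist p x = T.dist p a + 1) (hq : T.dist q a = T.dist q x + 1) :
    p = a ∧ q = x := by
  have hc := hT.isConnected
  have hdpq : T.dist p q = 1 := SimpleGraph.dist_eq_one_iff_adj.mpr hpq
  have hdqp : T.dist q p = 1 := by rwa [SimpleGraph.dist_comm] at hdpq
  have t1 : T.dist p x ≤ T.dist p q + T.dist q x := hc.dist_triangle
  have t2 : T.dist q a ≤ T.dist q p + T.dist p a := hc.dist_triangle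
  have hk : T.dist p a = T.dist q x := by omega
  obtain ⟨g1, hg1p, hg1l⟩ := hc.exists_path_of_dist p a
  obtain ⟨g2, hg2p, hg2l⟩ := hc.exists_path_of_dist q x
  have hAl : (g1.concat hax).length = T.dist p x := by
    rw [SimpleGraph.Walk.length_concat]; omega
  have hBl : (SimpleGraph.Walk.cons hpq g2).length = T.dist p x := by
    rw [SimpleGraph.Walk.length_cons]; omega
  have hApath := (g1.concat hax).isPath_of_length_eq_dist hAl
  have hBpath := (SimpleGraph.Walk.cons hpq g2).isPath_of_length_eq_dist hBl
  have hAB := path_eq hT hApath hBpath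
  have haA : a ∈ (g1.concat hax).support := by
    rw [SimpleGraph.Walk.support_concat]
    simp [g1.end_mem_support]
  rw [hAB, SimpleGraph.Walk.support_cons] at haA
  rcases List.mem_cons.mp haA with h | h
  · subst h
    have h0 : T.dist a a = 0 := by simp
    have hqx : T.dist q x = 0 := by omega
    exact ⟨rfl, (SimpleGraph.Connected.dist_eq_zero_iff hc).mp hqx⟩
  · exfalso
    have h5 := dist_add_dist_of_mem hc g2 hg2l h
    have h6 : T.dist a x = 1 := SimpleGraph.dist_eq_one_iff_adj.mpr hax
    omega


lemma exists_switch {u w : V} (W : T.Walk u w) (Pr : V → Prop) (hu : Pr u) (hw : ¬ Pr w) :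
    ∃ p q, p ∈ W.support ∧ T.Adj p q ∧ Pr p ∧ ¬ Pr q := by
  induction W with
  | nil => exact absurd hu hw
  | @cons u' v' w' h W ih =>
    by_cases h2 : Pr v'
    · obtain ⟨p, q, hps, rest⟩ := ih h2 hw
      exact ⟨p, q, by rw [SimpleGraph.Walk.support_cons]; exact List.mem_cons_of_mem _ hps, rest⟩
    · exact ⟨u', v', SimpleGraph.Walk.start_mem_support _, h, hu, h2⟩

/-- If `v` is on the `a`-side of edge `(a,x)` and `b` is on the `x`-side, then the
path from `v` to `b` goes through `a`. -/
lemma dist_through (hT : T.IsTree) {a x v b : V} (hax : T.Adj a x)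
    (hv : T.dist v x = T.dist v a + 1) (hb : T.dist b a = T.dist b x + 1) :
    T.dist v b = T.dist v a + T.dist a b := by
  have hc := hT.isConnected
  obtain ⟨g, hgp, hgl⟩ := hc.exists_path_of_dist v b
  have hbne : ¬ (T.dist b x = T.dist b a + 1) := by omega
  obtain ⟨p, q, hps, hpq, hp1, hq1⟩ :=
    exists_switch g (fun z => T.dist z x = T.dist z a + 1) hv hbne
  have hq2 : T.dist q a = T.dist q x + 1 := (adj_dist_cases_s19 hT hax q).resolve_left hq1
  obtain ⟨hpa, -⟩ := cross hT hax hpq hp1 hq2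
  subst hpa
  exact (dist_add_dist_of_mem hc g hgl hps).symm

open scoped Classical in
/-- Weight change across an edge, in terms of side sizes. -/
lemma weight_edge (hT : T.IsTree) {a x : V} (hax : T.Adj a x) :
    weight T x + (univ.filter (fun v => ¬ (T.dist v x = T.dist v a + 1))).card
      = weight T a + (univ.filter (fun v => T.dist v x = T.dist v a + 1)).card := by
  have hd : ∀ v ∈ univ.filter (fun v => T.dist v x = T.dist v a + 1),
      T.dist v x = T.dist v a + 1 := by
    intro v hv; exact (Finset.mem_filter.mp hv).2
  have hd' : ∀ v ∈ univ.filter (fun v => ¬ (T.dist v x = T.dist v a + 1)),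
      T.dist v a = T.dist v x + 1 := by
    intro v hv
    exact (adj_dist_cases_s19 hT hax v).resolve_left (Finset.mem_filter.mp hv).2
  have e1 : weight T x =
      ∑ v ∈ univ.filter (fun v => T.dist v x = T.dist v a + 1), T.dist v x
      + ∑ v ∈ univ.filter (fun v => ¬ (T.dist v x = T.dist v a + 1)), T.dist v x :=
    (Finset.sum_filter_add_sum_filter_not univ _ _).symm
  have e2 : weight T a =
      ∑ v ∈ univ.filter (fun v => T.dist v x = T.dist v a + 1), T.dist v a
      + ∑ v ∈ univ.filter (fun v => ¬ (T.dist v x = T.dist v a + 1)), T.dist v a :=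
    (Finset.sum_filter_add_sum_filter_not univ _ _).symm
  rw [e1, e2, Finset.sum_congr rfl (fun v hv => hd v hv),
    Finset.sum_congr rfl (fun v hv => hd' v hv), Finset.sum_add_distrib,
    Finset.sum_add_distrib]
  simp [Finset.sum_const]
  omega

/-- The two weight centers of a tree are adjacent. -/
lemma centers_adj (hT : T.IsTree) (hW : (weightCenters T).ncard = 2) :
    ∃ a b : V, a ≠ b ∧ weightCenters T = {a, b} ∧ T.Adj a b := by
  classical
  obtain ⟨a, b, hab, hset⟩ := Set.ncard_eq_two.mp hW
  refine ⟨a, b, hab, hset, ?_⟩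
  by_contra hnadj
  have hc := hT.isConnected
  have ha : a ∈ weightCenters T := by rw [hset]; exact Set.mem_insert _ _
  have hb : b ∈ weightCenters T := by rw [hset]; exact Set.mem_insert_of_mem _ rfl
  have hl0 : T.dist a b ≠ 0 := fun h => hab ((SimpleGraph.Connected.dist_eq_zero_iff hc).mp h)
  have hl1 : T.dist a b ≠ 1 := fun h => hnadj (SimpleGraph.dist_eq_one_iff_adj.mp h)
  have hl2 : 2 ≤ T.dist a b := by omega
  -- first step from a towards b
  obtain ⟨x, hax, hxb⟩ : ∃ x, T.Adj a x ∧ T.dist x b + 1 = T.dist a b := by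
    obtain ⟨g, hgp, hgl⟩ := hc.exists_path_of_dist a b
    cases g with
    | nil => exact absurd rfl hab
    | @cons _ x _ h g' =>
      refine ⟨x, h, ?_⟩
      rw [SimpleGraph.Walk.length_cons] at hgl
      have h1 : T.dist x b ≤ g'.length := SimpleGraph.dist_le _
      have h2 : T.dist a b ≤ T.dist a x + T.dist x b := hc.dist_triangle
      have h3 : T.dist a x = 1 := SimpleGraph.dist_eq_one_iff_adj.mpr h
      omega
  obtain ⟨y, hby, hya⟩ : ∃ y, T.Adj b y ∧ T.dist y a + 1 = T.dist b a := by
    obtain ⟨g, hgp, hgl⟩ := hc.exists_path_of_dist b a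
    cases g with
    | nil => exact absurd rfl hab
    | @cons _ y _ h g' =>
      refine ⟨y, h, ?_⟩
      rw [SimpleGraph.Walk.length_cons] at hgl
      have h1 : T.dist y a ≤ g'.length := SimpleGraph.dist_le _
      have h2 : T.dist b a ≤ T.dist b y + T.dist y a := hc.dist_triangle
      have h3 : T.dist b y = 1 := SimpleGraph.dist_eq_one_iff_adj.mpr h
      omega
  have hba : T.dist b a = T.dist a b := SimpleGraph.dist_comm ..
  have hwx := weight_edge hT hax
  have hwy := weight_edge hT hby
  have hax1 : weight T a ≤ weight T x := ha x
  have hby1 : weight T b ≤ weight T y := hb y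
  -- side sets
  set P := univ.filter (fun v => T.dist v x = T.dist v a + 1) with hP
  set N := univ.filter (fun v => ¬ (T.dist v x = T.dist v a + 1)) with hN
  set P' := univ.filter (fun v => T.dist v y = T.dist v b + 1) with hP'
  set N' := univ.filter (fun v => ¬ (T.dist v y = T.dist v b + 1)) with hN'
  have hcard1 : N.card ≤ P.card := by omega
  have hcard2 : N'.card ≤ P'.card := by omega
  have hPN : P.card + N.card = Fintype.card V := by
    rw [hP, hN]; rw [Finset.card_filter_add_card_filter_not]; rfl
  have hPN' : P'.card + N'.card = Fintype.card V := by
    rw [hP', hN']; rw [Finset.card_filter_add_card_filter_not]; rfl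
  -- disjointness
  have hdisj : Disjoint P P' := by
    rw [Finset.disjoint_left]
    intro v hv hv'
    have hv1 : T.dist v x = T.dist v a + 1 := (Finset.mem_filter.mp hv).2
    have hv2 : T.dist v y = T.dist v b + 1 := (Finset.mem_filter.mp hv').2
    -- b is on the x-side of (a,x): dist b a = dist b x + 1
    have hb1 : T.dist b a = T.dist b x + 1 := by
      rw [SimpleGraph.dist_comm (u := b) (v := x)]; omega
    have ha1 : T.dist a b = T.dist a y + 1 := by
      rw [SimpleGraph.dist_comm (u := a) (v := y)]; omega
    have d1 : T.dist v b = T.dist v a + T.dist a b := dist_through hT hax hv1 hb1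
    have d2 : T.dist v a = T.dist v b + T.dist b a := dist_through hT hby hv2 (by omega)
    omega
  have hunion : P.card + P'.card ≤ Fintype.card V := by
    rw [← Finset.card_union_of_disjoint hdisj]
    simpa using Finset.card_le_card (Finset.subset_univ (P ∪ P'))
  have hN_eq : N.card = P.card := by omega
  have hwxa : weight T x = weight T a := by omega
  have hxcen : x ∈ weightCenters T := fun u => hwxa ▸ ha u
  rw [hset] at hxcen
  rcases hxcen with h | h
  · exact hax.ne h.symm
  · rw [Set.mem_singleton_iff] at h
    subst h
    rw [SimpleGraph.dist_self] at hxb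
    omega

lemma dist_le_level (hT : T.IsTree) (hW : (weightCenters T).ncard = 2) (u v : V) :
    T.dist u v ≤ level T u + level T v + 1 := by
  obtain ⟨a, b, hab, hset, hadj⟩ := centers_adj hT hW
  have hane : a ∈ weightCenters T := hset ▸ Set.mem_insert _ _
  have hneu : ((fun x => T.dist u x) '' weightCenters T).Nonempty := ⟨_, a, hane, rfl⟩
  have hnev : ((fun x => T.dist v x) '' weightCenters T).Nonempty := ⟨_, a, hane, rfl⟩
  obtain ⟨cu, hcu, hcu2⟩ := Nat.sInf_mem hneu
  obtain ⟨cv, hcv, hcv2⟩ := Nat.sInf_mem hnev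
  have hlu : level T u = T.dist u cu := hcu2.symm
  have hlv : level T v = T.dist v cv := hcv2.symm
  rw [hset] at hcu hcv
  have hd : T.dist cu cv ≤ 1 := by
    have h1 : T.dist a b = 1 := SimpleGraph.dist_eq_one_iff_adj.mpr hadj
    have h2 : T.dist b a = 1 := by rwa [SimpleGraph.dist_comm] at h1
    rcases hcu with h | h <;> rcases hcv with h' | h' <;>
      simp only [Set.mem_singleton_iff] at * <;> subst h <;> subst h' <;>
      simp [h1, h2, SimpleGraph.dist_self]
  have t1 : T.dist u v ≤ T.dist u cu + T.dist cu v := hT.isConnected.dist_triangle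
  have t2 : T.dist cu v ≤ T.dist cu cv + T.dist cv v := hT.isConnected.dist_triangle
  have t3 : T.dist cv v = T.dist v cv := SimpleGraph.dist_comm ..
  omega

lemma boxProd_dist_le {n : ℕ} (hc : T.Connected) (p q : V × Fin n) :
    (T □ (⊤ : SimpleGraph (Fin n))).dist p q ≤ T.dist p.1 q.1 + 1 := by
  obtain ⟨u, i⟩ := p; obtain ⟨v, j⟩ := q
  obtain ⟨g, hgp, hgl⟩ := hc.exists_path_of_dist u v
  have hw1 : (g.boxProdLeft (⊤ : SimpleGraph (Fin n)) i).length = g.length := by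
    exact SimpleGraph.Walk.length_map _ _
  by_cases hij : i = j
  · subst hij
    have := SimpleGraph.dist_le (g.boxProdLeft (⊤ : SimpleGraph (Fin n)) i)
    simp only at this ⊢
    omega
  · have hadj : (T □ (⊤ : SimpleGraph (Fin n))).Adj (v, i) (v, j) :=
      SimpleGraph.boxProd_adj_right.mpr (by simpa using hij)
    have := SimpleGraph.dist_le ((g.boxProdLeft (⊤ : SimpleGraph (Fin n)) i).concat hadj)
    rw [SimpleGraph.Walk.length_concat] at this
    simp only at this ⊢
    omega

/-- Case 2 in the proof of Theorem 3.1: for a tree `T` with two weight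
centers, any radio labelling `f` of `T □ K_n`, inducing the ordering
`w_0, w_1, …, w_{mn−1}` by increasing labels with `f(w_0) = 0`, satisfies
`Σ_{t=0}^{mn−2} d(w_t, w_{t+1}) ≤ 2nL(T) + 2(mn − 1)`. -/
theorem sum_consecutive_dist_le_two_centers {V : Type*} [Fintype V]
    (T : SimpleGraph V) (hT : T.IsTree) (m n : ℕ)
    (hm : Fintype.card V = m) (hd : 2 ≤ T.diam) (hn : 2 ≤ n)
    (hW : (weightCenters T).ncard = 2)
    (f : V × Fin n → ℕ)
    (hf : IsRadioLabelling (T □ (⊤ : SimpleGraph (Fin n))) f)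
    (w : ℕ → V × Fin n) (hw : Set.BijOn w (Set.Iio (m * n)) Set.univ)
    (h0 : f (w 0) = 0)
    (hmono : ∀ s t, s < t → t < m * n → f (w s) < f (w t)) :
    ∑ t ∈ Finset.range (m * n - 1),
        (T □ (⊤ : SimpleGraph (Fin n))).dist (w t) (w (t + 1))
      ≤ 2 * n * totalLevel T + 2 * (m * n - 1) := by
  classical
  have hc := hT.isConnected
  have key : ∀ t, (T □ (⊤ : SimpleGraph (Fin n))).dist (w t) (w (t + 1))
      ≤ level T (w t).1 + level T (w (t + 1)).1 + 2 := by
    intro t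
    have h1 := boxProd_dist_le (n := n) hc (w t) (w (t + 1))
    have h2 := dist_le_level hT hW (w t).1 (w (t + 1)).1
    omega
  have hsum1 : ∑ t ∈ Finset.range (m * n - 1),
        (T □ (⊤ : SimpleGraph (Fin n))).dist (w t) (w (t + 1))
      ≤ ∑ t ∈ Finset.range (m * n - 1),
          (level T (w t).1 + level T (w (t + 1)).1 + 2) :=
    Finset.sum_le_sum (fun t _ => key t)
  have hbigsum : ∑ t ∈ Finset.range (m * n), level T (w t).1 = n * totalLevel T := by
    have h1 : ∑ t ∈ Finset.range (m * n), level T (w t).1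
        = ∑ p : V × Fin n, level T p.1 := by
      refine Finset.sum_bij (i := fun t _ => w t) (hi := fun t _ => Finset.mem_univ _)
        (i_inj := ?_) (i_surj := ?_) (h := fun t _ => rfl)
      · intro s hs t ht hst
        exact hw.injOn (by simpa [Set.mem_Iio] using Finset.mem_range.mp hs)
          (by simpa [Set.mem_Iio] using Finset.mem_range.mp ht) hst
      · intro p _
        obtain ⟨t, ht, hteq⟩ := hw.surjOn (Set.mem_univ p)
        exact ⟨t, Finset.mem_range.mpr ht, hteq⟩
    rw [h1, Fintype.sum_prod_type]
    simp only [Finset.sum_const, Finset.card_univ, Fintype.card_fin, smul_eq_mul]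
    rw [totalLevel, Finset.mul_sum]
  have hmn1 : 0 < m * n := by
    have hm0 : 0 < m := hm ▸ Fintype.card_pos_iff.mpr hc.nonempty
    exact Nat.mul_pos hm0 (by omega)
  have hs1 : ∑ t ∈ Finset.range (m * n - 1), level T (w t).1 ≤ n * totalLevel T := by
    rw [← hbigsum]
    exact Finset.sum_le_sum_of_subset (Finset.range_subset_range.mpr (by omega))
  have hs2 : ∑ t ∈ Finset.range (m * n - 1), level T (w (t + 1)).1 ≤ n * totalLevel T := by
    rw [← hbigsum, show m * n = (m * n - 1) + 1 by omega, Finset.sum_range_succ']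
    exact Nat.le_add_right _ _
  have hsplit : ∑ t ∈ Finset.range (m * n - 1),
        (level T (w t).1 + level T (w (t + 1)).1 + 2)
      = (∑ t ∈ Finset.range (m * n - 1), level T (w t).1)
        + (∑ t ∈ Finset.range (m * n - 1), level T (w (t + 1)).1)
        + 2 * (m * n - 1) := by
    rw [Finset.sum_add_distrib, Finset.sum_add_distrib, Finset.sum_const,
      Finset.card_range, smul_eq_mul]
    ring
  rw [mul_assoc]
  omega


end RadioPaper
end
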